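/- Let β > 1 and 0 < γ ≤ √2, and let η₁, η₂ ∈ ℝ with 0 ≤ η₂ ≤ η₁ < γ/2 and η₁² < β. Then Σ_{n=0}^∞ β^{-n} ∫₀^∞ (η₁ⁿ e^{η₁x} − η₂ⁿ e^{η₂x})² e^{-γx} dx ≤ (β/(β−1)) (η₁ − η₂)² ∫₀^∞ x² e^{(2η₁ − γ)x} dx, and the integral on the right-hand side is finite. In particular, the H_{β,γ}-distance between the exponentials e^{η₁·} and e^{η₂·} is bounded by a constant times |η₁ − η₂|. -/

import Mathlib

open MeasureTheory Set Real Filter ENNReal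

lemma aux_geom {t : ℝ} (ht0 : 0 ≤ t) (ht1 : t ≤ 1) (n : ℕ) :
    (n : ℝ) * t ^ (n - 1) * (1 - t) ≤ 1 - t ^ n := by
  cases n with
  | zero => simp
  | succ m =>
    have h1 : (m + 1 : ℝ) * t ^ m ≤ ∑ k ∈ Finset.range (m + 1), t ^ k := by
      have : (m + 1 : ℝ) * t ^ m = ∑ _k ∈ Finset.range (m + 1), t ^ m := by
        simp [Finset.sum_const, mul_comm]
      rw [this]
      exact Finset.sum_le_sum fun k hk =>
        pow_le_pow_of_le_one ht0 ht1 (Nat.le_of_lt_succ (Finset.mem_range.mp hk))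
    have h2 : (∑ k ∈ Finset.range (m + 1), t ^ k) * (1 - t) = 1 - t ^ (m + 1) := by
      have := geom_sum_mul t (m + 1)
      nlinarith [this]
    have h3 : (m + 1 : ℝ) * t ^ m * (1 - t) ≤ (∑ k ∈ Finset.range (m + 1), t ^ k) * (1 - t) :=
      mul_le_mul_of_nonneg_right h1 (by linarith)
    simpa [h2] using h3

-- key scalar inequality
lemma aux_key {a δ : ℝ} (ha : 0 ≤ a) (hδ : 0 ≤ δ) (hsum : 2 * a + δ ≤ Real.sqrt 2) (n : ℕ) :
    ((n : ℝ) * a ^ (n - 1) * δ + a ^ n) ^ 2 + (a ^ n) ^ 2 ≤ 2 := by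
  set s : ℝ := Real.sqrt 2 with hs
  have hs0 : (0:ℝ) < s := by positivity
  have hs2 : s ^ 2 = 2 := Real.sq_sqrt (by norm_num)
  set t : ℝ := s * a with htdef
  have ht0 : 0 ≤ t := by positivity
  have ht1 : t ≤ 1 := by nlinarith
  have hδle : δ ≤ s * (1 - t) := by nlinarith
  cases n with
  | zero => norm_num
  | succ m =>
    set u : ℝ := ((m + 1 : ℕ) : ℝ) * a ^ ((m + 1) - 1) * δ + a ^ (m + 1) with hu
    have hum : u = (m + 1 : ℝ) * a ^ m * δ + a ^ (m + 1) := by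
      simp [hu]
    have hu0 : 0 ≤ u := by
      rw [hum]; positivity
    -- s^(m+1) * u ≤ 2 - t^(m+1)
    have hstep : s ^ (m + 1) * u ≤ 2 - t ^ (m + 1) := by
      have hta : t ^ (m+1) = s ^ (m+1) * a ^ (m+1) := by rw [htdef, mul_pow]
      have htm : t ^ m = s ^ m * a ^ m := by rw [htdef, mul_pow]
      have hgeom := aux_geom ht0 ht1 (m + 1)
      have hgeom' : (m + 1 : ℝ) * t ^ m * (1 - t) ≤ 1 - t ^ (m + 1) := by
        simpa using hgeom
      have h1 : s ^ (m + 1) * u ≤ s ^ (m + 1) * ((m + 1 : ℝ) * a ^ m * (s * (1 - t)) + a ^ (m + 1)) := by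
        have : u ≤ (m + 1 : ℝ) * a ^ m * (s * (1 - t)) + a ^ (m + 1) := by
          rw [hum]
          have : (m + 1 : ℝ) * a ^ m * δ ≤ (m + 1 : ℝ) * a ^ m * (s * (1 - t)) :=
            mul_le_mul_of_nonneg_left hδle (by positivity)
          linarith
        exact mul_le_mul_of_nonneg_left this (by positivity)
      have h2 : s ^ (m + 1) * ((m + 1 : ℝ) * a ^ m * (s * (1 - t)) + a ^ (m + 1))
          = 2 * ((m + 1 : ℝ) * t ^ m * (1 - t)) + t ^ (m + 1) := by
        have e1 : t ^ (m + 1) = s ^ (m + 1) * a ^ (m + 1) := hta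
        have e2 : t ^ m = s ^ m * a ^ m := htm
        rw [e1, e2]
        linear_combination ((m : ℝ) + 1) * a ^ m * (1 - t) * s ^ m * hs2
      nlinarith [h1, h2, hgeom']
    -- conclude
    have htp0 : 0 ≤ t ^ (m + 1) := by positivity
    have htp1 : t ^ (m + 1) ≤ 1 := pow_le_one₀ ht0 ht1
    have hsp : (s ^ (m + 1)) ^ 2 = 2 ^ (m + 1) := by
      rw [← pow_mul, mul_comm, pow_mul, hs2]
    have h2p : (2:ℝ) ≤ 2 ^ (m + 1) := by
      calc (2:ℝ) = 2 ^ 1 := by norm_num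
      _ ≤ 2 ^ (m + 1) := pow_le_pow_right₀ (by norm_num) (by omega)
    have hX0 : 0 ≤ s ^ (m + 1) * u := by positivity
    have hsq : (s ^ (m + 1) * u) ^ 2 + (s ^ (m + 1) * a ^ (m + 1)) ^ 2 ≤ 4 := by
      have hta' : t ^ (m+1) = s ^ (m+1) * a ^ (m+1) := by rw [htdef, mul_pow]
      rw [← hta']
      have hsqX : (s ^ (m + 1) * u) ^ 2 ≤ (2 - t ^ (m + 1)) ^ 2 := by
        have h2T : (0:ℝ) ≤ 2 - t ^ (m+1) := by linarith
        nlinarith [hstep, hX0]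
      nlinarith [hsqX, htp0, htp1]
    have hexp : (s ^ (m + 1) * u) ^ 2 + (s ^ (m + 1) * a ^ (m + 1)) ^ 2
        = 2 ^ (m + 1) * (u ^ 2 + (a ^ (m + 1)) ^ 2) := by
      rw [mul_pow, mul_pow, hsp]; ring
    have hpos : (0:ℝ) < 2 ^ (m + 1) := by positivity
    have hE4 : 2 ^ (m + 1) * (u ^ 2 + (a ^ (m + 1)) ^ 2) ≤ 4 := by rw [← hexp]; exact hsq
    have hE : u ^ 2 + (a ^ (m + 1)) ^ 2 ≤ 4 / 2 ^ (m + 1) := by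
      rw [le_div_iff₀ hpos]
      linarith [hE4]
    have h42 : (4:ℝ) / 2 ^ (m + 1) ≤ 2 := by
      rw [div_le_iff₀ hpos]
      linarith [h2p]
    calc u ^ 2 + (a ^ (m + 1)) ^ 2 ≤ 4 / 2 ^ (m + 1) := hE
    _ ≤ 2 := h42

-- MVT bound
lemma aux_mvt {b a x : ℝ} (hb : 0 ≤ b) (hba : b ≤ a) (hx : 0 ≤ x) (n : ℕ) :
    |a ^ n * Real.exp (a * x) - b ^ n * Real.exp (b * x)|
      ≤ (a - b) * (((n : ℝ) * a ^ (n - 1) + x * a ^ n) * Real.exp (a * x)) := by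
  set f : ℝ → ℝ := fun t => t ^ n * Real.exp (t * x) with hf
  set f' : ℝ → ℝ := fun t => (n : ℝ) * t ^ (n - 1) * Real.exp (t * x)
    + t ^ n * (Real.exp (t * x) * (1 * x)) with hf'
  have hderiv : ∀ t ∈ Icc b a, HasDerivWithinAt f (f' t) (Icc b a) t := by
    intro t _
    exact ((hasDerivAt_pow n t).mul (((hasDerivAt_id t).mul_const x).exp)).hasDerivWithinAt
  set C : ℝ := ((n : ℝ) * a ^ (n - 1) + x * a ^ n) * Real.exp (a * x) with hC
  have hbound : ∀ t ∈ Ico b a, ‖f' t‖ ≤ C := by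
    intro t ht
    have ht0 : 0 ≤ t := le_trans hb ht.1
    have hta : t ≤ a := le_of_lt ht.2
    have hnn : 0 ≤ f' t := by
      rw [hf']
      positivity
    rw [Real.norm_eq_abs, abs_of_nonneg hnn, hf', hC]
    have hexp : Real.exp (t * x) ≤ Real.exp (a * x) :=
      Real.exp_le_exp.2 (mul_le_mul_of_nonneg_right hta hx)
    have h1 : (n : ℝ) * t ^ (n - 1) * Real.exp (t * x)
        ≤ (n : ℝ) * a ^ (n - 1) * Real.exp (a * x) :=
      mul_le_mul (mul_le_mul_of_nonneg_left (pow_le_pow_left₀ ht0 hta _) (Nat.cast_nonneg n))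
        hexp (Real.exp_nonneg _) (mul_nonneg (Nat.cast_nonneg n) (pow_nonneg (hb.trans hba) _))
    have h2 : t ^ n * (Real.exp (t * x) * (1 * x)) ≤ a ^ n * (Real.exp (a * x) * (1 * x)) :=
      mul_le_mul (pow_le_pow_left₀ ht0 hta _)
        (mul_le_mul_of_nonneg_right hexp (by positivity)) (by positivity)
        (pow_nonneg (le_trans ht0 hta) _)
    show (n : ℝ) * t ^ (n - 1) * Real.exp (t * x) + t ^ n * (Real.exp (t * x) * (1 * x))
      ≤ ((n : ℝ) * a ^ (n - 1) + x * a ^ n) * Real.exp (a * x)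
    nlinarith [h1, h2]
  have := norm_image_sub_le_of_norm_deriv_le_segment' hderiv hbound a (right_mem_Icc.2 hba)
  rw [Real.norm_eq_abs] at this
  calc |a ^ n * Real.exp (a * x) - b ^ n * Real.exp (b * x)| = |f a - f b| := rfl
  _ ≤ C * (a - b) := this
  _ = (a - b) * C := mul_comm _ _

lemma aux_integrable (k : ℕ) {δ : ℝ} (hδ : 0 < δ) :
    IntegrableOn (fun x : ℝ => x ^ k * Real.exp (-δ * x)) (Ioi 0) := by
  have h := integrableOn_rpow_mul_exp_neg_mul_rpow (p := 1) (s := (k : ℝ)) (b := δ)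
    (lt_of_lt_of_le neg_one_lt_zero (Nat.cast_nonneg k)) zero_lt_one hδ
  simpa [Real.rpow_one, Real.rpow_natCast] using h

lemma aux_integral (k : ℕ) {δ : ℝ} (hδ : 0 < δ) :
    ∫ x in Ioi (0:ℝ), x ^ k * Real.exp (-δ * x) = (k.factorial : ℝ) / δ ^ (k + 1) := by
  have h := Real.integral_rpow_mul_exp_neg_mul_Ioi (a := (k : ℝ) + 1) (r := δ)
    (by positivity) hδ
  have e1 : ∀ x : ℝ, x ^ ((k : ℝ) + 1 - 1) = x ^ k := by
    intro x; rw [add_sub_cancel_right, Real.rpow_natCast]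
  have e2 : ((k : ℝ) + 1) = ((k + 1 : ℕ) : ℝ) := by push_cast; ring
  have e3 : (1 / δ) ^ ((k : ℝ) + 1) = (1 / δ) ^ (k + 1) := by
    rw [e2, Real.rpow_natCast]
  simp only [e1, e3] at h
  have h2 : ∫ x in Ioi (0:ℝ), x ^ k * Real.exp (-δ * x)
      = ∫ x in Ioi (0:ℝ), x ^ k * Real.exp (-(δ * x)) := by
    congr 1; ext x; ring_nf
  rw [h2, h, Real.Gamma_nat_eq_factorial k, div_pow, one_pow, div_mul_eq_mul_div, one_mul]

lemma aux_lintegral (k : ℕ) {δ : ℝ} (hδ : 0 < δ) :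
    ∫⁻ x in Ioi (0:ℝ), ENNReal.ofReal (x ^ k * Real.exp (-δ * x))
      = ENNReal.ofReal ((k.factorial : ℝ) / δ ^ (k + 1)) := by
  rw [← aux_integral k hδ]
  rw [← ofReal_integral_eq_lintegral_ofReal (aux_integrable k hδ)]
  filter_upwards [ae_restrict_mem measurableSet_Ioi] with x hx
  have : (0:ℝ) < x := hx
  positivity

lemma aux_term (n : ℕ) {a b γ : ℝ} (hb : 0 ≤ b) (hba : b ≤ a) (hδ : 2 * a < γ)
    (hγs : γ ≤ Real.sqrt 2) :
    (∫⁻ x in Ioi (0:ℝ),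
        ENNReal.ofReal ((a ^ n * Real.exp (a * x) - b ^ n * Real.exp (b * x)) ^ 2 *
          Real.exp (-γ * x)))
      ≤ ENNReal.ofReal ((a - b) ^ 2) * ENNReal.ofReal (2 / (γ - 2 * a) ^ 3) := by
  have ha0 : 0 ≤ a := hb.trans hba
  set δ : ℝ := γ - 2 * a with hδdef
  have hδ0 : 0 < δ := by simp [hδdef]; linarith
  set A : ℝ := (n : ℝ) * a ^ (n - 1) with hA
  set B : ℝ := a ^ n with hB
  have hA0 : 0 ≤ A := by rw [hA]; positivity
  have hB0 : 0 ≤ B := by rw [hB]; positivity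
  -- pointwise bound
  have hpt : ∀ x ∈ Ioi (0:ℝ),
      ENNReal.ofReal ((a ^ n * Real.exp (a * x) - b ^ n * Real.exp (b * x)) ^ 2 *
        Real.exp (-γ * x))
      ≤ ENNReal.ofReal ((a - b) ^ 2 * ((A + B * x) ^ 2 * Real.exp (-δ * x))) := by
    intro x hx
    have hx0 : (0:ℝ) ≤ x := le_of_lt hx
    apply ENNReal.ofReal_le_ofReal
    have hmvt := aux_mvt hb hba hx0 n
    have hR0 : 0 ≤ (a - b) * ((A + x * B) * Real.exp (a * x)) := by
      have : 0 ≤ a - b := by linarith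
      positivity
    have hsq : (a ^ n * Real.exp (a * x) - b ^ n * Real.exp (b * x)) ^ 2
        ≤ ((a - b) * ((A + x * B) * Real.exp (a * x))) ^ 2 := by
      rw [← sq_abs]
      exact pow_le_pow_left₀ (abs_nonneg _) hmvt 2
    have hexp : Real.exp (a * x) ^ 2 * Real.exp (-γ * x) = Real.exp (-δ * x) := by
      rw [sq, ← Real.exp_add, ← Real.exp_add]
      congr 1
      rw [hδdef]; ring
    have := mul_le_mul_of_nonneg_right hsq (Real.exp_nonneg (-γ * x))
    calc (a ^ n * Real.exp (a * x) - b ^ n * Real.exp (b * x)) ^ 2 * Real.exp (-γ * x)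
        ≤ ((a - b) * ((A + x * B) * Real.exp (a * x))) ^ 2 * Real.exp (-γ * x) := this
      _ = (a - b) ^ 2 * ((A + B * x) ^ 2 * (Real.exp (a * x) ^ 2 * Real.exp (-γ * x))) := by
          ring
      _ = (a - b) ^ 2 * ((A + B * x) ^ 2 * Real.exp (-δ * x)) := by rw [hexp]
  -- integrability of the quadratic bound
  have hfun : (fun x : ℝ => (A + B * x) ^ 2 * Real.exp (-δ * x))
      = fun x : ℝ => A ^ 2 * (x ^ 0 * Real.exp (-δ * x)) + 2 * A * B * (x ^ 1 * Real.exp (-δ * x))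
        + B ^ 2 * (x ^ 2 * Real.exp (-δ * x)) := by
    funext x; ring
  have hint : IntegrableOn (fun x : ℝ => (A + B * x) ^ 2 * Real.exp (-δ * x)) (Ioi 0) := by
    rw [hfun]
    exact (((aux_integrable 0 hδ0).const_mul _).add ((aux_integrable 1 hδ0).const_mul _)).add
      ((aux_integrable 2 hδ0).const_mul _)
  have hval : ∫ x in Ioi (0:ℝ), (A + B * x) ^ 2 * Real.exp (-δ * x)
      = A ^ 2 * (1 / δ) + 2 * A * B * (1 / δ ^ 2) + B ^ 2 * (2 / δ ^ 3) := by
    have i0 := (aux_integrable 0 hδ0).const_mul (A ^ 2)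
    have i1 := (aux_integrable 1 hδ0).const_mul (2 * A * B)
    have i2 := (aux_integrable 2 hδ0).const_mul (B ^ 2)
    have i01 : Integrable (fun x : ℝ => A ^ 2 * (x ^ 0 * Real.exp (-δ * x))
        + 2 * A * B * (x ^ 1 * Real.exp (-δ * x))) (volume.restrict (Ioi 0)) := i0.add i1
    rw [hfun]
    rw [MeasureTheory.integral_add i01 i2, MeasureTheory.integral_add i0 i1,
      MeasureTheory.integral_const_mul, MeasureTheory.integral_const_mul,
      MeasureTheory.integral_const_mul,
      aux_integral 0 hδ0, aux_integral 1 hδ0, aux_integral 2 hδ0]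
    norm_num
  -- value bound from key inequality
  have hkey := aux_key ha0 hδ0.le (by rw [hδdef]; linarith) n
  have hkey' : (A * δ + B) ^ 2 + B ^ 2 ≤ 2 := by rw [hA, hB]; exact hkey
  have hexpand : A ^ 2 * δ ^ 2 + 2 * A * B * δ + 2 * B ^ 2 ≤ 2 := by nlinarith [hkey']
  have hvle : A ^ 2 * (1 / δ) + 2 * A * B * (1 / δ ^ 2) + B ^ 2 * (2 / δ ^ 3) ≤ 2 / δ ^ 3 := by
    have heq : A ^ 2 * (1 / δ) + 2 * A * B * (1 / δ ^ 2) + B ^ 2 * (2 / δ ^ 3)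
        = (A ^ 2 * δ ^ 2 + 2 * A * B * δ + 2 * B ^ 2) / δ ^ 3 := by
      field_simp
    rw [heq]
    gcongr
  -- assemble
  calc (∫⁻ x in Ioi (0:ℝ),
        ENNReal.ofReal ((a ^ n * Real.exp (a * x) - b ^ n * Real.exp (b * x)) ^ 2 *
          Real.exp (-γ * x)))
      ≤ ∫⁻ x in Ioi (0:ℝ),
          ENNReal.ofReal ((a - b) ^ 2 * ((A + B * x) ^ 2 * Real.exp (-δ * x))) :=
        setLIntegral_mono' measurableSet_Ioi hpt
    _ = ENNReal.ofReal (∫ x in Ioi (0:ℝ), (a - b) ^ 2 * ((A + B * x) ^ 2 * Real.exp (-δ * x))) := by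
        rw [ofReal_integral_eq_lintegral_ofReal (hint.const_mul _)]
        filter_upwards [ae_restrict_mem measurableSet_Ioi] with x hx
        positivity
    _ ≤ ENNReal.ofReal ((a - b) ^ 2 * (2 / δ ^ 3)) := by
        apply ENNReal.ofReal_le_ofReal
        rw [MeasureTheory.integral_const_mul, hval]
        exact mul_le_mul_of_nonneg_left hvle (sq_nonneg _)
    _ = ENNReal.ofReal ((a - b) ^ 2) * ENNReal.ofReal (2 / (γ - 2 * a) ^ 3) := by
        rw [← ENNReal.ofReal_mul (sq_nonneg _)]

/-- Lipschitz estimate for exponential curves in the Björk–Svensson space: for `β > 1`,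
`0 < γ ≤ √2` and `0 ≤ η₂ ≤ η₁ < γ/2` with `η₁² < β`,
`‖e^{η₁·} - e^{η₂·}‖²_{β,γ} ≤ (β/(β-1)) (η₁ - η₂)² ∫₀^∞ x² e^{(2η₁-γ)x} dx`,
and the integral on the right-hand side is finite. -/
theorem stmt_7 (β γ η₁ η₂ : ℝ) (hβ : 1 < β) (hγ0 : 0 < γ) (hγ : γ ≤ Real.sqrt 2)
    (hη₂ : 0 ≤ η₂) (hη : η₂ ≤ η₁) (hη₁ : η₁ < γ / 2) (hη₁β : η₁ ^ 2 < β) :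
    (∑' n : ℕ, ENNReal.ofReal ((1 / β) ^ n) *
        ∫⁻ x in Set.Ioi (0 : ℝ),
          ENNReal.ofReal ((η₁ ^ n * Real.exp (η₁ * x) - η₂ ^ n * Real.exp (η₂ * x)) ^ 2 *
            Real.exp (-γ * x)))
      ≤ ENNReal.ofReal (β / (β - 1) * (η₁ - η₂) ^ 2) *
          (∫⁻ x in Set.Ioi (0 : ℝ), ENNReal.ofReal (x ^ 2 * Real.exp ((2 * η₁ - γ) * x))) ∧
    (∫⁻ x in Set.Ioi (0 : ℝ), ENNReal.ofReal (x ^ 2 * Real.exp ((2 * η₁ - γ) * x))) < ⊤ := by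
  have hδ0 : 0 < γ - 2 * η₁ := by linarith
  -- the RHS integral
  have hJ : (∫⁻ x in Set.Ioi (0 : ℝ), ENNReal.ofReal (x ^ 2 * Real.exp ((2 * η₁ - γ) * x)))
      = ENNReal.ofReal (2 / (γ - 2 * η₁) ^ 3) := by
    have he : ∀ x : ℝ, x ^ 2 * Real.exp ((2 * η₁ - γ) * x)
        = x ^ 2 * Real.exp (-(γ - 2 * η₁) * x) := by
      intro x; congr 2; ring
    simp_rw [he]
    rw [aux_lintegral 2 hδ0]
    norm_num
  constructor
  · -- main estimate
    have hterm : ∀ n : ℕ,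
        ENNReal.ofReal ((1 / β) ^ n) *
          (∫⁻ x in Set.Ioi (0 : ℝ),
            ENNReal.ofReal ((η₁ ^ n * Real.exp (η₁ * x) - η₂ ^ n * Real.exp (η₂ * x)) ^ 2 *
              Real.exp (-γ * x)))
        ≤ ENNReal.ofReal ((1 / β) ^ n) *
            (ENNReal.ofReal ((η₁ - η₂) ^ 2) * ENNReal.ofReal (2 / (γ - 2 * η₁) ^ 3)) := by
      intro n
      exact mul_le_mul_right (aux_term n hη₂ hη (by linarith) hγ) _
    calc (∑' n : ℕ, ENNReal.ofReal ((1 / β) ^ n) *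
          ∫⁻ x in Set.Ioi (0 : ℝ),
            ENNReal.ofReal ((η₁ ^ n * Real.exp (η₁ * x) - η₂ ^ n * Real.exp (η₂ * x)) ^ 2 *
              Real.exp (-γ * x)))
        ≤ ∑' n : ℕ, ENNReal.ofReal ((1 / β) ^ n) *
            (ENNReal.ofReal ((η₁ - η₂) ^ 2) * ENNReal.ofReal (2 / (γ - 2 * η₁) ^ 3)) :=
          ENNReal.tsum_le_tsum hterm
      _ = (∑' n : ℕ, ENNReal.ofReal ((1 / β) ^ n)) *
            (ENNReal.ofReal ((η₁ - η₂) ^ 2) * ENNReal.ofReal (2 / (γ - 2 * η₁) ^ 3)) :=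
          ENNReal.tsum_mul_right
      _ = ENNReal.ofReal (β / (β - 1)) *
            (ENNReal.ofReal ((η₁ - η₂) ^ 2) * ENNReal.ofReal (2 / (γ - 2 * η₁) ^ 3)) := by
          congr 1
          have hb0 : (0:ℝ) ≤ 1 / β := by positivity
          have h1 : ∀ n : ℕ, ENNReal.ofReal ((1 / β) ^ n) = ENNReal.ofReal (1 / β) ^ n := by
            intro n; rw [ENNReal.ofReal_pow hb0]
          simp_rw [h1]
          rw [ENNReal.tsum_geometric]
          have h2 : (1 : ℝ≥0∞) - ENNReal.ofReal (1 / β) = ENNReal.ofReal (1 - 1 / β) := by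
            rw [ENNReal.ofReal_sub _ hb0, ENNReal.ofReal_one]
          rw [h2, ← ENNReal.ofReal_inv_of_pos (by
            have : 1 / β < 1 := by
              rw [div_lt_one (by linarith)]; linarith
            linarith)]
          congr 1
          have hβ0 : β ≠ 0 := by linarith
          have hβ1 : β - 1 ≠ 0 := by intro h; apply absurd hβ; linarith
          field_simp
      _ = ENNReal.ofReal (β / (β - 1) * (η₁ - η₂) ^ 2) *
            ENNReal.ofReal (2 / (γ - 2 * η₁) ^ 3) := by
          rw [← mul_assoc, ← ENNReal.ofReal_mul (by
            have h1 : (0:ℝ) < β - 1 := by linarith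
            positivity)]
      _ = ENNReal.ofReal (β / (β - 1) * (η₁ - η₂) ^ 2) *
            (∫⁻ x in Set.Ioi (0 : ℝ), ENNReal.ofReal (x ^ 2 * Real.exp ((2 * η₁ - γ) * x))) := by
          rw [hJ]
  · rw [hJ]
    exact ENNReal.ofReal_lt_top
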